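/- Let G be a connected graph of order n ≥ 3 such that d(u) + d(v) ≥ n - 1 for every pair of non-adjacent vertices u, v of G. Then prc(G) = χ'(G). -/

import Mathlib

open SimpleGraph

variable {V : Type*}

/-- A walk is rainbow under edge colouring `c` if its edges receive pairwise distinct colours. -/
def SimpleGraph.Walk.IsRainbow {G : SimpleGraph V} {u v : V} (c : Sym2 V → ℕ) (p : G.Walk u v) :
    Prop :=
  (p.edges.map c).Nodup

/-- `G` is rainbow connected under the edge colouring `c`: any two vertices are joined by a
rainbow path. -/
def SimpleGraph.RainbowConnected (G : SimpleGraph V) (c : Sym2 V → ℕ) : Prop :=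
  ∀ u v : V, ∃ p : G.Walk u v, p.IsPath ∧ p.IsRainbow c

/-- `c` is a proper edge colouring of `G`: adjacent edges receive distinct colours. -/
def SimpleGraph.IsProperEdgeColoring (G : SimpleGraph V) (c : Sym2 V → ℕ) : Prop :=
  ∀ ⦃u v w : V⦄, G.Adj u v → G.Adj u w → v ≠ w → c s(u, v) ≠ c s(u, w)

/-- The colouring `c` uses at most `k` colours on the edges of `G`. -/
def SimpleGraph.ColorsLE (G : SimpleGraph V) (c : Sym2 V → ℕ) (k : ℕ) : Prop :=
  ∀ e ∈ G.edgeSet, c e < k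

/-- The rainbow connection number `rc(G)`. -/
noncomputable def SimpleGraph.rcNumber (G : SimpleGraph V) : ℕ :=
  sInf {k | ∃ c : Sym2 V → ℕ, G.ColorsLE c k ∧ G.RainbowConnected c}

/-- The proper rainbow connection number `prc(G)`. -/
noncomputable def SimpleGraph.prcNumber (G : SimpleGraph V) : ℕ :=
  sInf {k | ∃ c : Sym2 V → ℕ, G.ColorsLE c k ∧ G.IsProperEdgeColoring c ∧ G.RainbowConnected c}

/-- The chromatic index `χ'(G)`. -/
noncomputable def SimpleGraph.chromaticIndex (G : SimpleGraph V) : ℕ :=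
  sInf {k | ∃ c : Sym2 V → ℕ, G.ColorsLE c k ∧ G.IsProperEdgeColoring c}

theorem stmt13 {V : Type*} [Fintype V] [DecidableEq V] (G : SimpleGraph V) [DecidableRel G.Adj]
    (hconn : G.Connected) (hn : 3 ≤ Fintype.card V)
    (hdeg : ∀ u v : V, u ≠ v → ¬ G.Adj u v →
      Fintype.card V - 1 ≤ G.degree u + G.degree v) :
    G.prcNumber = G.chromaticIndex := by
  have key : ∀ c : Sym2 V → ℕ, G.IsProperEdgeColoring c → G.RainbowConnected c := by
    intro c hc u v
    by_cases huv : u = v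
    · subst huv
      exact ⟨Walk.nil, Walk.IsPath.nil, by simp [Walk.IsRainbow]⟩
    by_cases hadj : G.Adj u v
    · exact ⟨Walk.cons hadj Walk.nil, by simp [huv], by simp [Walk.IsRainbow]⟩
    · -- common neighbour
      have hsub : G.neighborFinset u ∪ G.neighborFinset v ⊆
          Finset.univ \ {u, v} := by
        intro x hx
        simp only [Finset.mem_union, mem_neighborFinset] at hx
        simp only [Finset.mem_sdiff, Finset.mem_univ, true_and, Finset.mem_insert,
          Finset.mem_singleton]
        rcases hx with h | h
        · push_neg
          exact ⟨fun he => G.loopless.irrefl u (he ▸ h), fun he => hadj (he ▸ h)⟩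
        · push_neg
          refine ⟨fun he => hadj ?_, fun he => G.loopless.irrefl v (he ▸ h)⟩
          exact he ▸ h.symm
      have hcard2 : (Finset.univ \ ({u, v} : Finset V)).card = Fintype.card V - 2 := by
        rw [Finset.card_sdiff_of_subset (by simp)]
        simp [Finset.card_insert_of_notMem, huv, Finset.card_univ]
      have h1 := Finset.card_le_card hsub
      have h2 := Finset.card_inter_add_card_union (G.neighborFinset u) (G.neighborFinset v)
      have h3 := hdeg u v huv hadj
      rw [← card_neighborFinset_eq_degree, ← card_neighborFinset_eq_degree] at h3
      have hne : ((G.neighborFinset u) ∩ (G.neighborFinset v)).Nonempty := by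
        rw [← Finset.card_pos]
        omega
      obtain ⟨w, hw⟩ := hne
      simp only [Finset.mem_inter, mem_neighborFinset] at hw
      obtain ⟨hw1, hw2⟩ := hw
      refine ⟨Walk.cons hw1 (Walk.cons hw2.symm Walk.nil), ?_, ?_⟩
      · simp [Walk.isPath_def, huv, hw1.ne, hw2.ne']
      · simp only [Walk.IsRainbow, Walk.edges_cons, Walk.edges_nil, List.map_cons,
          List.map_nil, List.nodup_cons, List.mem_cons, List.not_mem_nil, or_false,
          List.nodup_nil, and_true]
        have := hc hw1.symm hw2.symm huv
        rw [Sym2.eq_swap] at this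
        exact ⟨this, not_false⟩
  unfold SimpleGraph.prcNumber SimpleGraph.chromaticIndex
  congr 1
  ext k
  constructor
  · rintro ⟨c, h1, h2, _⟩
    exact ⟨c, h1, h2⟩
  · rintro ⟨c, h1, h2⟩
    exact ⟨c, h1, h2, key c h2⟩
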